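/- Let F₁,…,F_m be vectors spanning ℝⁿ, suppose there exist ε̄ > 0 and a unit vector v̄ with ⟨F_i, v̄⟩ ≥ ε̄ for all i, and let 0 < ε < ε̄. Let K := {v : ⟨F_i, v⟩ ≥ 0 for all i} and K_ε := {v : ⟨F_i, v⟩ ≥ ε‖v‖ for all i}. Then the Hilbert-metric diameter of K_ε inside K is finite: sup{ d_K(v₁, v₂) : v₁, v₂ ∈ K_ε\{0} } < ∞. -/

import Mathlib

set_option maxHeartbeats 1000000


/-- `M_K(v,w) := inf {λ ≥ 0 : λw − v ∈ K}`, equal to `∞` if no such `λ` exists. -/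
noncomputable def hilbertM {E : Type*} [NormedAddCommGroup E] [NormedSpace ℝ E]
    (K : Set E) (v w : E) : ENNReal :=
  sInf {l : ENNReal | ∃ r : ℝ, 0 ≤ r ∧ l = ENNReal.ofReal r ∧ r • w - v ∈ K}

/-- `m_K(v,w) := sup {λ ≥ 0 : v − λw ∈ K}`. -/
noncomputable def hilbertm {E : Type*} [NormedAddCommGroup E] [NormedSpace ℝ E]
    (K : Set E) (v w : E) : ℝ :=
  sSup {r : ℝ | 0 ≤ r ∧ v - r • w ∈ K}

/-- The Hilbert metric `d_K(v,w) := log (M_K(v,w) / m_K(v,w))`, as an extended real. -/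
noncomputable def hilbertDist {E : Type*} [NormedAddCommGroup E] [NormedSpace ℝ E]
    (K : Set E) (v w : E) : EReal :=
  ENNReal.log (hilbertM K v w / ENNReal.ofReal (hilbertm K v w))

open scoped RealInnerProductSpace

/-- **Finite Hilbert diameter of the ε-subcone in a polyhedral cone.**
Let `F₁, …, F_m` span ℝⁿ, suppose feasibility holds with margin `ε̄ > 0` at a unit vector
`v̄`, and let `0 < ε < ε̄`. Then the Hilbert-metric diameter, inside the polyhedral cone
`K = {v : ⟨F_i,v⟩ ≥ 0}`, of the subcone `K_ε = {v : ⟨F_i,v⟩ ≥ ε‖v‖}` is finite: there is a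
real bound `B` with `d_K(v₁,v₂) ≤ B` for all nonzero `v₁, v₂ ∈ K_ε`. -/
theorem polyhedral_hilbert_diameter_finite {n m : ℕ}
    (F : Fin m → EuclideanSpace ℝ (Fin n))
    (hspan : Submodule.span ℝ (Set.range F) = ⊤)
    (εbar : ℝ) (hεbar : 0 < εbar)
    (vbar : EuclideanSpace ℝ (Fin n)) (hvbar : ‖vbar‖ = 1)
    (hfeas : ∀ i, εbar ≤ ⟪F i, vbar⟫)
    (ε : ℝ) (hε0 : 0 < ε) (hε : ε < εbar) :
    ∃ B : ℝ, ∀ v₁ v₂ : EuclideanSpace ℝ (Fin n), v₁ ≠ 0 → v₂ ≠ 0 →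
      (∀ i, ε * ‖v₁‖ ≤ ⟪F i, v₁⟫) → (∀ i, ε * ‖v₂‖ ≤ ⟪F i, v₂⟫) →
      hilbertDist {v : EuclideanSpace ℝ (Fin n) | ∀ i, 0 ≤ ⟪F i, v⟫} v₁ v₂ ≤ (B : EReal) := by
  set K : Set (EuclideanSpace ℝ (Fin n)) := {v | ∀ i, 0 ≤ ⟪F i, v⟫} with hK
  set C : ℝ := ε + ∑ i, ‖F i‖ with hCdef
  have hC : 0 < C := by
    have : (0:ℝ) ≤ ∑ i, ‖F i‖ := Finset.sum_nonneg fun i _ => norm_nonneg _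
    linarith
  have hCi : ∀ i, ‖F i‖ ≤ C := by
    intro i
    have := Finset.single_le_sum (f := fun i => ‖F i‖)
      (fun j _ => norm_nonneg (F j)) (Finset.mem_univ i)
    simpa [hCdef] using by linarith
  refine ⟨Real.log (C^2 / ε^2), ?_⟩
  intro v₁ v₂ h1 h2 hv1 hv2
  have ha : 0 < ‖v₁‖ := norm_pos_iff.mpr h1
  have hb : 0 < ‖v₂‖ := norm_pos_iff.mpr h2
  set a := ‖v₁‖; set b := ‖v₂‖
  set lam : ℝ := C * a / (ε * b) with hlam
  set mu : ℝ := ε * a / (C * b) with hmu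
  have hlampos : 0 < lam := div_pos (mul_pos hC ha) (mul_pos hε0 hb)
  have hmupos : 0 < mu := div_pos (mul_pos hε0 ha) (mul_pos hC hb)
  -- upper bound on M
  have hMle : hilbertM K v₁ v₂ ≤ ENNReal.ofReal lam := by
    apply sInf_le
    refine ⟨lam, hlampos.le, rfl, ?_⟩
    intro i
    have h1i : ⟪F i, v₁⟫ ≤ C * a :=
      le_trans (real_inner_le_norm _ _) (mul_le_mul_of_nonneg_right (hCi i) ha.le)
    have h2i : ε * b ≤ ⟪F i, v₂⟫ := hv2 i
    have : C * a ≤ lam * ⟪F i, v₂⟫ := by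
      rw [hlam]
      rw [div_mul_eq_mul_div, le_div_iff₀ (mul_pos hε0 hb)]
      calc C * a * (ε * b) = (ε * b) * (C * a) := by ring
        _ ≤ ⟪F i, v₂⟫ * (C * a) := by
            apply mul_le_mul_of_nonneg_right h2i (mul_pos hC ha).le
        _ = C * a * ⟪F i, v₂⟫ := by ring
    have := le_trans h1i this
    rw [inner_sub_right, real_inner_smul_right]
    linarith
  rcases Nat.eq_zero_or_pos m with hm | hm
  · -- m = 0 : M = 0, log 0 = ⊥
    have hM0 : hilbertM K v₁ v₂ = 0 := by
      apply le_antisymm _ zero_le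
      have : (0:ENNReal) ∈ {l : ENNReal | ∃ r : ℝ, 0 ≤ r ∧ l = ENNReal.ofReal r ∧ r • v₂ - v₁ ∈ K} := by
        refine ⟨0, le_refl _, by simp, ?_⟩
        intro i; exact absurd i.2 (by omega)
      simpa [hilbertM] using sInf_le this
    simp [hilbertDist, hM0, ENNReal.zero_div]
  · -- m ≥ 1
    have hmem : mu ∈ {r : ℝ | 0 ≤ r ∧ v₁ - r • v₂ ∈ K} := by
      refine ⟨hmupos.le, ?_⟩
      intro i
      have h1i : ε * a ≤ ⟪F i, v₁⟫ := hv1 i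
      have h2i : ⟪F i, v₂⟫ ≤ C * b :=
        le_trans (real_inner_le_norm _ _) (mul_le_mul_of_nonneg_right (hCi i) hb.le)
      have hmul : mu * ⟪F i, v₂⟫ ≤ ε * a := by
        rw [hmu, div_mul_eq_mul_div, div_le_iff₀ (mul_pos hC hb)]
        exact mul_le_mul_of_nonneg_left h2i (mul_pos hε0 ha).le
      rw [inner_sub_right, real_inner_smul_right]
      linarith
    have hbdd : BddAbove {r : ℝ | 0 ≤ r ∧ v₁ - r • v₂ ∈ K} := by
      refine ⟨lam, ?_⟩
      rintro r ⟨hr0, hrK⟩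
      have i0 : Fin m := ⟨0, hm⟩
      have h0 := hrK i0
      rw [inner_sub_right, real_inner_smul_right] at h0
      have h1i : ⟪F i0, v₁⟫ ≤ C * a :=
        le_trans (real_inner_le_norm _ _) (mul_le_mul_of_nonneg_right (hCi i0) ha.le)
      have h2i : ε * b ≤ ⟪F i0, v₂⟫ := hv2 i0
      rw [hlam, le_div_iff₀ (mul_pos hε0 hb)]
      nlinarith
    have hmge : mu ≤ hilbertm K v₁ v₂ := le_csSup hbdd hmem
    have hmden : ENNReal.ofReal mu ≤ ENNReal.ofReal (hilbertm K v₁ v₂) :=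
      ENNReal.ofReal_le_ofReal hmge
    have hdiv : hilbertM K v₁ v₂ / ENNReal.ofReal (hilbertm K v₁ v₂)
        ≤ ENNReal.ofReal lam / ENNReal.ofReal mu :=
      ENNReal.div_le_div hMle hmden
    have heq : ENNReal.ofReal lam / ENNReal.ofReal mu = ENNReal.ofReal (lam / mu) :=
      (ENNReal.ofReal_div_of_pos hmupos).symm
    have hratio : lam / mu = C^2 / ε^2 := by
      rw [hlam, hmu]
      field_simp
    have hfinal : hilbertM K v₁ v₂ / ENNReal.ofReal (hilbertm K v₁ v₂)
        ≤ ENNReal.ofReal (C^2 / ε^2) := by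
      rw [← hratio, ← heq]; exact hdiv
    have hlog := ENNReal.log_monotone hfinal
    rw [ENNReal.log_ofReal_of_pos (div_pos (pow_pos hC 2) (pow_pos hε0 2))] at hlog
    exact hlog
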